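/- Let x_1, ..., x_n be n ≥ 3 real numbers with mean x̄, and let j ≠ k be indices. Equality ∑ x_i² = n·x̄² + (1/2)(x_j − x_k)² + (2n/(n−2))·(x̄ − (x_j+x_k)/2)² holds if and only if all x_i with i ∉ {j,k} are equal to each other. -/
import Mathlib

open Finset

theorem stmt1 (n : ℕ) (hn : 3 ≤ n) (x : Fin n → ℝ) (j k : Fin n) (hjk : j ≠ k) :
    (∑ i, (x i) ^ 2 =
      (n : ℝ) * ((∑ i, x i) / n) ^ 2 + (1 / 2) * (x j - x k) ^ 2
        + (2 * n / ((n : ℝ) - 2)) * ((∑ i, x i) / n - (x j + x k) / 2) ^ 2)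
    ↔ (∀ i i' : Fin n, i ≠ j → i ≠ k → i' ≠ j → i' ≠ k → x i = x i') := by
  set s : Finset (Fin n) := (Finset.univ.erase j).erase k with hs
  have hks : k ∈ Finset.univ.erase j := mem_erase.2 ⟨hjk.symm, mem_univ k⟩
  have hmem : ∀ i : Fin n, i ∈ s ↔ i ≠ k ∧ i ≠ j := by
    intro i; simp [hs]
  have hcard : (s.card : ℝ) = (n : ℝ) - 2 := by
    have h : s.card = n - 2 := by
      rw [hs, card_erase_of_mem hks, card_erase_of_mem (mem_univ j), card_univ,
        Fintype.card_fin]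
      omega
    rw [h, Nat.cast_sub (by omega)]; norm_num
  have hn0 : (n : ℝ) ≠ 0 := by positivity
  have hn2 : (n : ℝ) - 2 ≠ 0 := by
    have : (3 : ℝ) ≤ n := by exact_mod_cast hn
    linarith
  have hsplit : ∀ f : Fin n → ℝ, ∑ i, f i = f j + (f k + ∑ i ∈ s, f i) := by
    intro f
    rw [← Finset.add_sum_erase _ f (mem_univ j), ← Finset.add_sum_erase _ f hks]
  have key : ∑ i, (x i) ^ 2 -
      ((n : ℝ) * ((∑ i, x i) / n) ^ 2 + (1 / 2) * (x j - x k) ^ 2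
        + (2 * n / ((n : ℝ) - 2)) * ((∑ i, x i) / n - (x j + x k) / 2) ^ 2)
      = (((n : ℝ) - 2) * (∑ i ∈ s, (x i) ^ 2) - (∑ i ∈ s, x i) ^ 2) / ((n : ℝ) - 2) := by
    rw [hsplit (fun i => (x i) ^ 2), hsplit x]
    field_simp
    ring
  have hds : ∑ i ∈ s, ∑ i' ∈ s, (x i - x i') ^ 2
      = 2 * (((n : ℝ) - 2) * (∑ i ∈ s, (x i) ^ 2) - (∑ i ∈ s, x i) ^ 2) := by
    have : ∀ i ∈ s, ∑ i' ∈ s, (x i - x i') ^ 2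
        = ((n : ℝ) - 2) * (x i) ^ 2 - 2 * x i * (∑ i' ∈ s, x i') + ∑ i' ∈ s, (x i') ^ 2 := by
      intro i _
      simp only [sub_sq, sum_add_distrib, sum_sub_distrib, sum_const, nsmul_eq_mul, hcard,
        ← mul_sum]
    rw [sum_congr rfl this]
    simp only [sum_add_distrib, sum_sub_distrib, ← sum_mul, ← mul_sum, sum_const,
      nsmul_eq_mul, hcard]
    ring
  constructor
  · intro h i i' hij hik hij' hik'
    have h0 : (((n : ℝ) - 2) * (∑ i ∈ s, (x i) ^ 2) - (∑ i ∈ s, x i) ^ 2) = 0 := by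
      have := key
      rw [h, sub_self] at this
      field_simp at this
      linarith [this]
    have hsum0 : ∑ i ∈ s, ∑ i' ∈ s, (x i - x i') ^ 2 = 0 := by rw [hds, h0]; ring
    have hall := (Finset.sum_eq_zero_iff_of_nonneg (fun i _ =>
      Finset.sum_nonneg (fun i' _ => sq_nonneg _))).1 hsum0
    have h1 := hall i ((hmem i).2 ⟨hik, hij⟩)
    have h2 := (Finset.sum_eq_zero_iff_of_nonneg (fun i' _ => sq_nonneg _)).1 h1
      i' ((hmem i').2 ⟨hik', hij'⟩)
    have := pow_eq_zero_iff (n := 2) (by norm_num) |>.1 h2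
    linarith [this]
  · intro h
    have h0 : ∑ i ∈ s, ∑ i' ∈ s, (x i - x i') ^ 2 = 0 := by
      apply Finset.sum_eq_zero; intro i hi
      apply Finset.sum_eq_zero; intro i' hi'
      rw [h i i' ((hmem i).1 hi).2 ((hmem i).1 hi).1 ((hmem i').1 hi').2 ((hmem i').1 hi').1]
      ring
    have hnum : (((n : ℝ) - 2) * (∑ i ∈ s, (x i) ^ 2) - (∑ i ∈ s, x i) ^ 2) = 0 := by
      rw [hds] at h0; linarith
    have := key
    rw [hnum] at this
    simp at this
    linarith [this]
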